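/- Let f be the formal power series over ℚ given by f = Σ_{n≥0} (F n / n!)·Xⁿ, where F n is the number of ordered set partitions of an n-element set into blocks of size at most 2. Then (1 − X − (1/2)·X²) · f = 1 in ℚ⟦X⟧; equivalently, the exponential generating function of F is 1/(1 − x − x²/2). -/

import Mathlib

open Finset in
/-- Predicate: `B` is an ordered partition of `s` into blocks of size at most 2. -/
def IsOPart {α : Type*} [DecidableEq α] (s : Finset α) (B : List (Finset α)) : Prop :=
  (∀ b ∈ B, b.Nonempty ∧ b.card ≤ 2) ∧ B.Pairwise Disjoint ∧ B.foldr (· ∪ ·) ∅ = s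

section OPart

open Finset

variable {α : Type*} [DecidableEq α]

lemma subset_foldr {B : List (Finset α)} {b : Finset α} (hb : b ∈ B) :
    b ⊆ B.foldr (· ∪ ·) ∅ := by
  induction B with
  | nil => simp at hb
  | cons hd tl ih =>
    rcases List.mem_cons.mp hb with rfl | hb
    · exact subset_union_left
    · exact (ih hb).trans subset_union_right

lemma disjoint_foldr {B : List (Finset α)} {a : Finset α} (h : ∀ b ∈ B, Disjoint a b) :
    Disjoint a (B.foldr (· ∪ ·) ∅) := by
  induction B with
  | nil => simp
  | cons hd tl ih =>
    simp only [List.foldr_cons, disjoint_union_right]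
    exact ⟨h hd (.head _), ih fun b hb => h b (.tail _ hb)⟩

lemma IsOPart.tail {s : Finset α} {hd : Finset α} {tl : List (Finset α)}
    (h : IsOPart s (hd :: tl)) : IsOPart (s \ hd) tl := by
  obtain ⟨h1, h2, h3⟩ := h
  obtain ⟨hdisj, h2'⟩ := List.pairwise_cons.mp h2
  refine ⟨fun b hb => h1 b (.tail _ hb), h2', ?_⟩
  have hd_disj : Disjoint hd (tl.foldr (· ∪ ·) ∅) := disjoint_foldr hdisj
  rw [← h3]
  simp only [List.foldr_cons]
  exact (union_sdiff_cancel_left hd_disj).symm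

lemma IsOPart.length_le {s : Finset α} {B : List (Finset α)} (h : IsOPart s B) :
    B.length ≤ s.card := by
  induction B generalizing s with
  | nil => simp
  | cons hd tl ih =>
    have htl := ih h.tail
    obtain ⟨h1, h2, h3⟩ := h
    have hd_sub : hd ⊆ s := h3 ▸ subset_foldr (.head _)
    have hpos : 1 ≤ hd.card := (h1 hd (.head _)).1.card_pos
    have : (s \ hd).card = s.card - hd.card := card_sdiff_of_subset hd_sub
    have hle : hd.card ≤ s.card := card_le_card hd_sub
    simp only [List.length_cons]
    omega

instance finite_isOPart [Fintype α] (s : Finset α) : Finite {B // IsOPart s B} := by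
  classical
  apply Finite.of_injective (fun B : {B // IsOPart s B} =>
    (fun i : Fin s.card => B.1[(i : ℕ)]?))
  rintro ⟨B1, h1⟩ ⟨B2, h2⟩ h
  ext1
  apply List.ext_getElem?
  intro n
  by_cases hn : n < s.card
  · exact congrFun h ⟨n, hn⟩
  · rw [List.getElem?_eq_none (h1.length_le.trans (le_of_not_gt hn)),
      List.getElem?_eq_none (h2.length_le.trans (le_of_not_gt hn))]

lemma isOPart_empty (B : List (Finset α)) : IsOPart (∅ : Finset α) B ↔ B = [] := by
  constructor
  · rintro ⟨h1, h2, h3⟩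
    cases B with
    | nil => rfl
    | cons hd tl =>
      exfalso
      have : hd ⊆ (∅ : Finset α) := h3 ▸ subset_foldr (.head _)
      exact (h1 hd (.head _)).1.ne_empty (subset_empty.mp this)
  · rintro rfl
    exact ⟨by simp, by simp, rfl⟩

lemma card_opart_empty : Nat.card {B : List (Finset α) // IsOPart ∅ B} = 1 := by
  rw [Nat.card_eq_one_iff_unique]
  constructor
  · constructor
    rintro ⟨B1, h1⟩ ⟨B2, h2⟩
    simp only [isOPart_empty] at h1 h2
    simp [h1, h2]
  · exact ⟨⟨[], (isOPart_empty _).2 rfl⟩⟩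

lemma foldr_map_union {β : Type*} [DecidableEq β] (f : α ↪ β) (B : List (Finset α)) :
    (B.map (Finset.map f)).foldr (· ∪ ·) ∅ = (B.foldr (· ∪ ·) ∅).map f := by
  induction B with
  | nil => simp
  | cons hd tl ih => simp [ih, Finset.map_union]

lemma card_opart_map {β : Type*} [DecidableEq β] (f : α ↪ β) (s : Finset α) :
    Nat.card {B : List (Finset α) // IsOPart s B}
      = Nat.card {B : List (Finset β) // IsOPart (s.map f) B} := by
  apply Nat.card_eq_of_bijective (fun B => ⟨B.1.map (Finset.map f), by
    obtain ⟨B, hB⟩ := B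
    refine ⟨?_, ?_, ?_⟩
    · intro c hc
      obtain ⟨b, hb, rfl⟩ := List.mem_map.mp hc
      exact ⟨Finset.map_nonempty.2 (hB.1 b hb).1, by simpa using (hB.1 b hb).2⟩
    · exact hB.2.1.map _ (fun a b hab => (Finset.disjoint_map f).2 hab)
    · rw [foldr_map_union, hB.2.2]⟩)
  constructor
  · rintro ⟨B, hB⟩ ⟨B', hB'⟩ h
    simp only [Subtype.mk.injEq] at h
    exact Subtype.ext (List.map_injective_iff.2 (Finset.map_injective f) h)
  · rintro ⟨C, hC⟩
    have key : ∀ c ∈ C, (c.preimage f f.injective.injOn).map f = c := by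
      intro c hc
      have hcsub : c ⊆ s.map f := hC.2.2 ▸ subset_foldr hc
      ext x
      simp only [Finset.mem_map, Finset.mem_preimage]
      constructor
      · rintro ⟨y, hy, rfl⟩; exact hy
      · intro hx
        obtain ⟨a, _, rfl⟩ := Finset.mem_map.mp (hcsub hx)
        exact ⟨a, hx, rfl⟩
    set B := C.map (fun c => c.preimage f f.injective.injOn) with hBdef
    have hBC : B.map (Finset.map f) = C := by
      rw [hBdef, List.map_map]
      conv_rhs => rw [← List.map_id C]
      exact List.map_congr_left (fun c hc => key c hc)
    have hfold : (B.foldr (· ∪ ·) ∅).map f = s.map f := by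
      rw [← foldr_map_union, hBC, hC.2.2]
    refine ⟨⟨B, ?_, ?_, ?_⟩, Subtype.ext hBC⟩
    · intro b hb
      have hmem : b.map f ∈ C := hBC ▸ List.mem_map_of_mem (f := Finset.map f) hb
      obtain ⟨h1, h2⟩ := hC.1 _ hmem
      exact ⟨Finset.map_nonempty.mp h1, by simpa using h2⟩
    · have := hBC ▸ hC.2.1
      rw [List.pairwise_map] at this
      exact this.imp (fun hab => (Finset.disjoint_map f).1 hab)
    · exact Finset.map_injective f hfold

end OPart

section Rec

open Finset

lemma card_opart_rec {α : Type*} [Fintype α] [DecidableEq α] (s : Finset α) (hs : s.Nonempty) :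
    Nat.card {B : List (Finset α) // IsOPart s B} =
      ∑ b ∈ s.powerset.filter (fun b => b.Nonempty ∧ b.card ≤ 2),
        Nat.card {B : List (Finset α) // IsOPart (s \ b) B} := by
  classical
  have key : Nat.card (Σ b : {b // b ∈ s.powerset.filter (fun b => b.Nonempty ∧ b.card ≤ 2)},
        {B : List (Finset α) // IsOPart (s \ b.1) B})
      = Nat.card {B : List (Finset α) // IsOPart s B} := by
    apply Nat.card_eq_of_bijective (fun x => ⟨x.1.1 :: x.2.1, by
      obtain ⟨⟨b, hb⟩, ⟨B, hB⟩⟩ := x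
      simp only [mem_filter, mem_powerset] at hb
      obtain ⟨hbs, hbne, hbcard⟩ := hb
      refine ⟨?_, ?_, ?_⟩
      · intro c hc
        rcases List.mem_cons.mp hc with rfl | hc
        · exact ⟨hbne, hbcard⟩
        · exact hB.1 c hc
      · rw [List.pairwise_cons]
        refine ⟨fun t ht => ?_, hB.2.1⟩
        have : t ⊆ s \ b := hB.2.2 ▸ subset_foldr ht
        exact disjoint_sdiff_self_right.mono_right this
      · simp only [List.foldr_cons, hB.2.2]
        exact union_sdiff_of_subset hbs⟩)
    constructor
    · rintro ⟨⟨b, hb⟩, ⟨B, hB⟩⟩ ⟨⟨b', hb'⟩, ⟨B', hB'⟩⟩ h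
      simp only [Subtype.mk.injEq, List.cons.injEq] at h
      obtain ⟨rfl, rfl⟩ := h
      rfl
    · rintro ⟨B, hB⟩
      cases B with
      | nil =>
        exfalso
        exact hs.ne_empty (hB.2.2.symm)
      | cons hd tl =>
        have hhd : hd ∈ s.powerset.filter (fun b => b.Nonempty ∧ b.card ≤ 2) := by
          simp only [mem_filter, mem_powerset]
          exact ⟨hB.2.2 ▸ subset_foldr (.head _), (hB.1 hd (.head _)).1, (hB.1 hd (.head _)).2⟩
        exact ⟨⟨⟨hd, hhd⟩, ⟨tl, hB.tail⟩⟩, rfl⟩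
  rw [← key]
  haveI : ∀ b : Finset α, Fintype {B : List (Finset α) // IsOPart (s \ b) B} :=
    fun b => Fintype.ofFinite _
  haveI : Fintype (Subtype (Membership.mem (s.powerset.filter (fun b => b.Nonempty ∧ b.card ≤ 2)))) :=
    FinsetCoe.fintype _
  rw [Nat.card_eq_fintype_card, Fintype.card_sigma]
  rw [Finset.sum_subtype (s.powerset.filter (fun b => b.Nonempty ∧ b.card ≤ 2))
    (fun _ => Iff.rfl) (fun b => Nat.card {B : List (Finset α) // IsOPart (s \ b) B})]
  · simp [Nat.card_eq_fintype_card]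
  · exact FinsetCoe.fintype _

end Rec

section Fc

open Finset

/-- The number of ordered set partitions of `Fin n` into blocks of size at most 2. -/
noncomputable def Fc (n : ℕ) : ℕ :=
  Nat.card {B : List (Finset (Fin n)) // IsOPart (univ : Finset (Fin n)) B}

lemma card_opart_eq_Fc {α : Type*} [Fintype α] [DecidableEq α] (s : Finset α) :
    Nat.card {B : List (Finset α) // IsOPart s B} = Fc s.card := by
  classical
  let e := s.equivFin
  let f : Fin s.card ↪ α :=
    ⟨fun i => (e.symm i : α), fun i j h => e.symm.injective (Subtype.ext h)⟩
  have himg : (univ : Finset (Fin s.card)).map f = s := by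
    ext x
    simp only [Finset.mem_map, Finset.mem_univ, true_and, f]
    constructor
    · rintro ⟨i, rfl⟩; exact (e.symm i).2
    · intro hx; exact ⟨e ⟨x, hx⟩, congrArg Subtype.val (e.symm_apply_apply ⟨x, hx⟩)⟩
  have := card_opart_map f (univ : Finset (Fin s.card))
  rw [himg] at this
  exact this.symm

lemma Fc_zero : Fc 0 = 1 := by
  rw [Fc, Finset.univ_eq_empty, card_opart_empty]

lemma Fc_rec (m : ℕ) (hm : 0 < m) :
    Fc m = m * Fc (m - 1) + m.choose 2 * Fc (m - 2) := by
  classical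
  haveI : NeZero m := ⟨hm.ne'⟩
  have huniv : (univ : Finset (Fin m)).Nonempty := univ_nonempty
  rw [Fc, card_opart_rec _ huniv]
  have hsum : ∀ b ∈ (univ : Finset (Fin m)).powerset.filter (fun b => b.Nonempty ∧ b.card ≤ 2),
      Nat.card {B : List (Finset (Fin m)) // IsOPart (univ \ b) B} = Fc (m - b.card) := by
    intro b _
    rw [card_opart_eq_Fc]
    congr 1
    rw [card_sdiff_of_subset (subset_univ b), card_univ, Fintype.card_fin]
  rw [Finset.sum_congr rfl hsum]
  have hT : (univ : Finset (Fin m)).powerset.filter (fun b => b.Nonempty ∧ b.card ≤ 2)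
      = powersetCard 1 (univ : Finset (Fin m)) ∪ powersetCard 2 univ := by
    ext b
    simp only [mem_filter, mem_powerset, subset_univ, true_and, mem_union,
      Finset.mem_powersetCard, ← Finset.card_pos]
    omega
  have hdisj : Disjoint (powersetCard 1 (univ : Finset (Fin m))) (powersetCard 2 univ) := by
    rw [Finset.disjoint_left]
    intro b h1 h2
    rw [Finset.mem_powersetCard] at h1 h2
    omega
  rw [hT, Finset.sum_union hdisj]
  have h1 : ∑ b ∈ powersetCard 1 (univ : Finset (Fin m)), Fc (m - b.card) = m * Fc (m - 1) := by
    rw [Finset.sum_congr rfl (fun b hb => by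
      rw [(Finset.mem_powersetCard.mp hb).2]), Finset.sum_const, Finset.card_powersetCard,
      card_univ, Fintype.card_fin, Nat.choose_one_right, smul_eq_mul]
  have h2 : ∑ b ∈ powersetCard 2 (univ : Finset (Fin m)), Fc (m - b.card) =
      m.choose 2 * Fc (m - 2) := by
    rw [Finset.sum_congr rfl (fun b hb => by
      rw [(Finset.mem_powersetCard.mp hb).2]), Finset.sum_const, Finset.card_powersetCard,
      card_univ, Fintype.card_fin, smul_eq_mul]
  rw [h1, h2]

lemma Fc_one : Fc 1 = 1 := by
  have := Fc_rec 1 one_pos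
  simpa [Fc_zero] using this

end Fc

/-- `F n` is the number of ordered set partitions of `Fin n` with blocks of
size at most `2` (the restricted Fubini number `F_{n, ≤ 2}`). -/
noncomputable def restrictedFubini (n : ℕ) : ℕ :=
  Nat.card {B : List (Finset (Fin n)) //
    (∀ b ∈ B, b.Nonempty ∧ b.card ≤ 2) ∧
    B.Pairwise Disjoint ∧
    B.foldr (· ∪ ·) ∅ = Finset.univ}

lemma restrictedFubini_eq (n : ℕ) : restrictedFubini n = Fc n := rfl

/-- The exponential generating function of the restricted Fubini numbers
`F_{n, ≤ 2}` is `1 / (1 - x - x²/2)`. -/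
theorem egf_restrictedFubini :
    (1 - PowerSeries.X - PowerSeries.C (1 / 2 : ℚ) * PowerSeries.X ^ 2) *
      PowerSeries.mk (fun n => (restrictedFubini n : ℚ) / (Nat.factorial n : ℚ)) = 1 := by
  have hrec : ∀ n : ℕ, 2 * Fc (n + 2) = 2 * ((n + 2) * Fc (n + 1)) + (n + 2) * (n + 1) * Fc n := by
    intro n
    have h2 : 2 * (n + 2).choose 2 = (n + 2) * (n + 1) := by
      rw [Nat.choose_two_right, show n + 2 - 1 = n + 1 from rfl]
      have he : 2 ∣ (n + 2) * (n + 1) := by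
        have h := (Nat.even_mul_succ_self (n + 1)).two_dvd
        rwa [mul_comm] at h
      exact Nat.mul_div_cancel' he
    have := Fc_rec (n + 2) (by omega)
    simp only [show n + 2 - 1 = n + 1 from rfl, show n + 2 - 2 = n from rfl] at this
    calc 2 * Fc (n + 2) = 2 * ((n+2) * Fc (n+1)) + (2 * (n+2).choose 2) * Fc n := by
          rw [this]; ring
      _ = _ := by rw [h2]
  apply PowerSeries.ext
  intro n
  set f := PowerSeries.mk (fun n => (restrictedFubini n : ℚ) / (Nat.factorial n : ℚ)) with hf
  have hexp : (1 - PowerSeries.X - PowerSeries.C (1 / 2 : ℚ) * PowerSeries.X ^ 2) * f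
      = f - PowerSeries.X * f - PowerSeries.C (1 / 2 : ℚ) * (PowerSeries.X ^ 2 * f) := by
    ring
  rw [hexp]
  simp only [map_sub, PowerSeries.coeff_C_mul, PowerSeries.coeff_one]
  match n with
  | 0 =>
    simp [hf, PowerSeries.coeff_zero_eq_constantCoeff, restrictedFubini_eq, Fc_zero,
      PowerSeries.coeff_X_pow_mul' f 2 0]
  | 1 =>
    rw [PowerSeries.coeff_succ_X_mul, PowerSeries.coeff_X_pow_mul' f 2 1]
    simp [hf, restrictedFubini_eq, Fc_zero, Fc_one]
  | (n + 2) =>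
    rw [PowerSeries.coeff_succ_X_mul, PowerSeries.coeff_X_pow_mul f 2 n]
    simp only [hf, PowerSeries.coeff_mk, restrictedFubini_eq, if_neg (by omega : ¬ n + 2 = 0)]
    have hr := hrec n
    have hrQ : 2 * (Fc (n + 2) : ℚ) = 2 * ((n + 2) * Fc (n + 1)) + (n + 2) * (n + 1) * Fc n := by
      exact_mod_cast congrArg (fun x : ℕ => (x : ℚ)) hr
    have hfac2 : ((n + 2).factorial : ℚ) = (n + 2) * (n + 1) * (n.factorial : ℚ) := by
      rw [show n + 2 = (n + 1) + 1 by ring, Nat.factorial_succ, Nat.factorial_succ]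
      push_cast; ring
    have hfac1 : ((n + 1).factorial : ℚ) = (n + 1) * (n.factorial : ℚ) := by
      rw [Nat.factorial_succ]; push_cast; ring
    have h0 : (n.factorial : ℚ) ≠ 0 := Nat.cast_ne_zero.mpr n.factorial_ne_zero
    have hn1 : ((n : ℚ) + 1) ≠ 0 := by positivity
    have hn2 : ((n : ℚ) + 2) ≠ 0 := by positivity
    rw [hfac2, hfac1]
    field_simp
    linear_combination hrQ
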